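/- Let H be a simply connected combinatorial strata structure endowed with a datum (N, {P_J}) of nodal strata, and let B be a nodal separating block of N in H. Set H_B = H \ Cl_H(B). Then for every i ∈ I, the sets A_B(i) and B_B(i) are exactly the two 1-connected components of H(1) in H_B. -/

import Mathlib

/-- A combinatorial strata structure with minimal set of indices the (finite) type `I`:
an open subset of `𝒫(I)` (i.e. a family closed under taking subsets) containing all
singletons. -/
def IsCSS {I : Type*} (H : Set (Finset I)) : Prop :=
  (∀ J ∈ H, ∀ J' : Finset I, J' ⊆ J → J' ∈ H) ∧ ∀ i : I, ({i} : Finset I) ∈ H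

/-- `level H k` is `H(k)`, the set of strata of `H` with exactly `k` elements. -/
def level {I : Type*} (H : Set (Finset I)) (k : ℕ) : Set (Finset I) :=
  {J ∈ H | J.card = k}

/-- A `k`-path in `H`: a nonempty sequence of strata of `H(k)` such that the union of
any two consecutive entries lies in `H(k+1)`. -/
def IsKPath {I : Type*} [DecidableEq I] (H : Set (Finset I)) (k : ℕ)
    (γ : List (Finset I)) : Prop :=
  γ ≠ [] ∧ (∀ J ∈ γ, J ∈ level H k) ∧
    γ.Chain' fun J J' => (J ∪ J') ∈ level H (k + 1)

/-- The path `γ` joins `J` and `J'`. -/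
def Joins {I : Type*} (γ : List (Finset I)) (J J' : Finset I) : Prop :=
  γ.head? = some J ∧ γ.getLast? = some J'

/-- The subsupport of a path: the sequence of unions of consecutive entries. -/
def subSup {I : Type*} [DecidableEq I] (γ : List (Finset I)) : List (Finset I) :=
  List.zipWith (· ∪ ·) γ γ.tail

open Classical in
/-- `kappa B γ`: the number of entries of the subsupport of `γ` that belong to `B`. -/
noncomputable def kappa {I : Type*} [DecidableEq I] (B : Set (Finset I))
    (γ : List (Finset I)) : ℕ :=
  (subSup γ).countP fun J => decide (J ∈ B)

/-- `A` is `k`-connected in `H`: any two elements of `A` are joined by a `k`-path in `H`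
with support contained in `A`. -/
def KConnectedIn {I : Type*} [DecidableEq I] (H : Set (Finset I)) (k : ℕ)
    (A : Set (Finset I)) : Prop :=
  ∀ J ∈ A, ∀ J' ∈ A, ∃ γ : List (Finset I),
    IsKPath H k γ ∧ Joins γ J J' ∧ ∀ K ∈ γ, K ∈ A

/-- `C` is a `k`-connected component of `A` in `H`: a maximal nonempty `k`-connected
subset of `A`. -/
def IsKComponent {I : Type*} [DecidableEq I] (H : Set (Finset I)) (k : ℕ)
    (A C : Set (Finset I)) : Prop :=
  C.Nonempty ∧ C ⊆ A ∧ KConnectedIn H k C ∧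
    ∀ C' : Set (Finset I), C ⊆ C' → C' ⊆ A → KConnectedIn H k C' → C' = C

/-- `H` is 1-connected: `H(1)` is 1-connected in `H`. -/
def OneConnected {I : Type*} [DecidableEq I] (H : Set (Finset I)) : Prop :=
  KConnectedIn H 1 (level H 1)

/-- One-sided version of an elementary homotopic pair of 1-paths in `H`. -/
def ElemPairCore {I : Type*} [DecidableEq I] (H : Set (Finset I))
    (ε ε' : List (Finset I)) : Prop :=
  ε = ε'
  ∨ (∃ i₁ i₂ : I, ε = [{i₁}, {i₂}, {i₁}] ∧ ε' = [{i₁}])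
  ∨ (∃ i₁ i₂ i₃ : I, ε = [{i₁}, {i₂}] ∧ ε' = [{i₁}, {i₃}, {i₂}] ∧
      IsKPath H 2 [{i₁, i₃}, {i₃, i₂}])

/-- An elementary homotopic pair of 1-paths in `H` (up to swapping the two paths). -/
def ElemPair {I : Type*} [DecidableEq I] (H : Set (Finset I))
    (ε ε' : List (Finset I)) : Prop :=
  ElemPairCore H ε ε' ∨ ElemPairCore H ε' ε

/-- `γ₂` is obtained from `γ₁` by an elementary homotopy. -/
def ElemHomotopy {I : Type*} [DecidableEq I] (H : Set (Finset I))
    (γ₁ γ₂ : List (Finset I)) : Prop :=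
  ∃ δ ε₁ ε₂ ρ : List (Finset I),
    ElemPair H ε₁ ε₂ ∧ γ₁ = δ ++ ε₁ ++ ρ ∧ γ₂ = δ ++ ε₂ ++ ρ

/-- `γ` and `γ'` are homotopically equivalent in `H` with support in `A`: they are linked
by a finite chain of elementary homotopies in which every intermediate 1-path has
support in `A`. -/
def HomotopicIn {I : Type*} [DecidableEq I] (H A : Set (Finset I))
    (γ γ' : List (Finset I)) : Prop :=
  (IsKPath H 1 γ ∧ ∀ J ∈ γ, J ∈ A) ∧
    Relation.ReflTransGen
      (fun g₁ g₂ => ElemHomotopy H g₁ g₂ ∧ IsKPath H 1 g₂ ∧ ∀ J ∈ g₂, J ∈ A) γ γ'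

/-- A 1-connected subset `A ⊆ H(1)` is simply connected in `H`: any two 1-paths in `H`
with support in `A` joining the same strata are homotopically equivalent in `H` with
support in `A`. -/
def SimplyConnectedIn {I : Type*} [DecidableEq I] (H A : Set (Finset I)) : Prop :=
  KConnectedIn H 1 A ∧
    ∀ γ γ' : List (Finset I), IsKPath H 1 γ → IsKPath H 1 γ' →
      (∀ J ∈ γ, J ∈ A) → (∀ J ∈ γ', J ∈ A) →
      γ.head? = γ'.head? → γ.getLast? = γ'.getLast? →
      HomotopicIn H A γ γ'

/-- `H` is simply connected: `H(1)` is simply connected in `H`. -/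
def SimplyConnected {I : Type*} [DecidableEq I] (H : Set (Finset I)) : Prop :=
  SimplyConnectedIn H (level H 1)

/-- The closure of `A` in `H`: the strata of `H` containing some element of `A`. -/
def Cl {I : Type*} (H A : Set (Finset I)) : Set (Finset I) :=
  {J' ∈ H | ∃ J ∈ A, J ⊆ J'}

/-- A datum of nodal strata `(N, {P_J})` in `H`: a subset `N ⊆ H` together with, for each
`J ∈ N`, a partition `P_J = {J₊, J₋}` of `J` into two nonempty parts, such that for every
`J ∈ N` and `J' ⊆ J` one has `J' ∈ N` iff `J' ∩ J₊ ≠ ∅ ≠ J' ∩ J₋`, and in that case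
`P_{J'} = {J' ∩ J₊, J' ∩ J₋}`. -/
structure NodalDatum {I : Type*} [DecidableEq I] (H : Set (Finset I)) : Type _ where
  N : Set (Finset I)
  N_sub : N ⊆ H
  plus : Finset I → Finset I
  minus : Finset I → Finset I
  plus_nonempty : ∀ J ∈ N, (plus J).Nonempty
  minus_nonempty : ∀ J ∈ N, (minus J).Nonempty
  union_eq : ∀ J ∈ N, plus J ∪ minus J = J
  disj : ∀ J ∈ N, Disjoint (plus J) (minus J)
  mem_iff : ∀ J ∈ N, ∀ J' : Finset I, J' ⊆ J →
    (J' ∈ N ↔ (J' ∩ plus J).Nonempty ∧ (J' ∩ minus J).Nonempty)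
  part_eq : ∀ J ∈ N, ∀ J' : Finset I, J' ⊆ J → J' ∈ N →
    ({plus J', minus J'} : Set (Finset I)) = {J' ∩ plus J, J' ∩ minus J}

/-- `N*`: the set of uninterrupted nodal strata, i.e. `J ∈ N` with `Cl_H({J}) ⊆ N`. -/
def Nstar {I : Type*} [DecidableEq I] {H : Set (Finset I)} (D : NodalDatum H) :
    Set (Finset I) :=
  {J ∈ D.N | ∀ J' ∈ H, J ⊆ J' → J' ∈ D.N}

/-- A nodal block of `N` in `H`: a 2-connected component of `N(2) = N ∩ H(2)` in `H`. -/
def IsNodalBlock {I : Type*} [DecidableEq I] {H : Set (Finset I)} (D : NodalDatum H)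
    (B : Set (Finset I)) : Prop :=
  IsKComponent H 2 (D.N ∩ level H 2) B

/-- A nodal separating block: a nodal block contained in `N*`. -/
def IsSepBlock {I : Type*} [DecidableEq I] {H : Set (Finset I)} (D : NodalDatum H)
    (B : Set (Finset I)) : Prop :=
  IsNodalBlock D B ∧ B ⊆ Nstar D

/-- The separator set: the union of all nodal separating blocks. -/
def SepSet {I : Type*} [DecidableEq I] {H : Set (Finset I)} (D : NodalDatum H) :
    Set (Finset I) :=
  ⋃₀ {B | IsSepBlock D B}

/-- `A_B(i)`: the set of `{j} ∈ H(1)` joined to `{i}` by a 1-path `γ` in `H` with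
`κ_B(γ)` even. -/
def ABset {I : Type*} [DecidableEq I] (H B : Set (Finset I)) (i : I) : Set (Finset I) :=
  {J ∈ level H 1 | ∃ γ : List (Finset I),
    IsKPath H 1 γ ∧ Joins γ {i} J ∧ Even (kappa B γ)}

/-- `B_B(i)`: the set of `{j} ∈ H(1)` joined to `{i}` by a 1-path `γ` in `H` with
`κ_B(γ)` odd. -/
def BBset {I : Type*} [DecidableEq I] (H B : Set (Finset I)) (i : I) : Set (Finset I) :=
  {J ∈ level H 1 | ∃ γ : List (Finset I),
    IsKPath H 1 γ ∧ Joins γ {i} J ∧ Odd (kappa B γ)}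
set_option linter.unnecessarySeqFocus false
open Classical

section Toolkit
variable {I : Type*} [DecidableEq I] {H B : Set (Finset I)}

lemma kappa_nil : kappa B ([] : List (Finset I)) = 0 := rfl

lemma kappa_single (a : Finset I) : kappa B [a] = 0 := rfl

lemma kappa_cons_cons (a b : Finset I) (l : List (Finset I)) :
    kappa B (a :: b :: l) = (if a ∪ b ∈ B then 1 else 0) + kappa B (b :: l) := by
  simp only [kappa, subSup, List.tail_cons, List.zipWith_cons_cons, List.countP_cons]
  by_cases h : a ∪ b ∈ B <;> simp [h] <;> omega

lemma kappa_append_cons (l r : List (Finset I)) (a : Finset I) :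
    kappa B (l ++ a :: r) = kappa B (l ++ [a]) + kappa B (a :: r) := by
  induction l with
  | nil => simp [kappa_single]
  | cons x l ih =>
    cases l with
    | nil => simp only [List.nil_append, List.cons_append, kappa_cons_cons, kappa_single]; omega
    | cons y m =>
      simp only [List.cons_append, kappa_cons_cons] at ih ⊢
      omega

lemma kappa_split_zero {l r : List (Finset I)} {a : Finset I}
    (h : kappa B (l ++ a :: r) = 0) : kappa B (l ++ [a]) = 0 ∧ kappa B (a :: r) = 0 := by
  rw [kappa_append_cons] at h; omega

lemma kappa_reverse (l : List (Finset I)) : kappa B l.reverse = kappa B l := by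
  induction l with
  | nil => rfl
  | cons a l ih =>
    cases l with
    | nil => rfl
    | cons b m =>
      have h1 : (a :: b :: m).reverse = m.reverse ++ b :: [a] := by
        simp
      rw [h1, kappa_append_cons]
      have h2 : m.reverse ++ [b] = (b :: m).reverse := by simp
      rw [h2, ih, kappa_cons_cons, kappa_cons_cons, kappa_single,
        Finset.union_comm]
      omega

end Toolkit
set_option linter.unusedSectionVars false

section Paths
variable {I : Type*} [DecidableEq I] {H B : Set (Finset I)} {k : ℕ}

lemma IsKPath.infix' {γ γ' : List (Finset I)} (h : IsKPath H k γ) (hinf : γ' <:+: γ)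
    (hne : γ' ≠ []) : IsKPath H k γ' :=
  ⟨hne, fun J hJ => h.2.1 J (hinf.subset hJ), h.2.2.infix hinf⟩

lemma IsKPath.rev {γ : List (Finset I)} (h : IsKPath H k γ) :
    IsKPath H k γ.reverse := by
  refine ⟨by simpa using h.1, fun J hJ => h.2.1 J (by simpa using hJ), ?_⟩
  show List.IsChain _ _; rw [List.isChain_reverse]
  exact h.2.2.imp (fun a b hab => by rwa [Finset.union_comm])

lemma Joins.rev {γ : List (Finset I)} {x y : Finset I} (h : Joins γ x y) :
    Joins γ.reverse y x := by
  refine ⟨?_, ?_⟩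
  · rw [List.head?_reverse]; exact h.2
  · rw [List.getLast?_reverse]; exact h.1

lemma Joins.head_cons {a : Finset I} {t : List (Finset I)} {x y : Finset I}
    (h : Joins (a :: t) x y) : a = x := by
  have := h.1; simp [List.head?] at this; exact this

lemma joins_head_eq {γ : List (Finset I)} {x y : Finset I} (h : Joins γ x y)
    (hne : γ ≠ []) : ∃ t, γ = x :: t := by
  cases γ with
  | nil => exact absurd rfl hne
  | cons a t => exact ⟨t, by rw [h.head_cons]⟩

lemma joins_last_eq {γ : List (Finset I)} {x y : Finset I} (h : Joins γ x y)
    (hne : γ ≠ []) : ∃ t, γ = t ++ [y] := by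
  refine ⟨γ.dropLast, ?_⟩
  have h2 := h.2
  conv_lhs => rw [← List.dropLast_append_getLast hne]
  congr 1
  rw [List.getLast?_eq_getLast hne] at h2
  simp at h2
  rw [h2]

lemma Joins.append_single {π : List (Finset I)} {x y F : Finset I}
    (h : Joins π x y) : Joins (π ++ [F]) x F := by
  constructor
  · rw [List.head?_append, h.1]; rfl
  · rw [List.getLast?_append]; rfl

lemma Joins.cons' {π : List (Finset I)} {x y F : Finset I}
    (h : Joins π x y) (hne : π ≠ []) : Joins (F :: π) F y := by
  refine ⟨rfl, ?_⟩
  cases π with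
  | nil => exact absurd rfl hne
  | cons a t => rw [List.getLast?_cons_cons]; exact h.2

/-- Gluing two paths sharing an endpoint. -/
lemma glue {γ₁ γ₂ : List (Finset I)} {x y z : Finset I}
    (h₁ : IsKPath H k γ₁) (h₂ : IsKPath H k γ₂)
    (j₁ : Joins γ₁ x y) (j₂ : Joins γ₂ y z) :
    ∃ γ : List (Finset I), IsKPath H k γ ∧ Joins γ x z ∧
      kappa B γ = kappa B γ₁ + kappa B γ₂ ∧ ∀ J ∈ γ, J ∈ γ₁ ∨ J ∈ γ₂ := by
  obtain ⟨q, hq⟩ := joins_head_eq j₂ h₂.1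
  cases q with
  | nil =>
    have hz : z = y := by
      have := j₂.2; rw [hq] at this; simp at this; exact this.symm
    exact ⟨γ₁, h₁, hz ▸ j₁, by simp [hq, kappa_single], fun J hJ => Or.inl hJ⟩
  | cons b t =>
    obtain ⟨d, hd⟩ := joins_last_eq j₁ h₁.1
    refine ⟨γ₁ ++ b :: t, ?_, ?_, ?_, fun J hJ => ?_⟩
    · refine ⟨by simp [h₁.1], fun J hJ => ?_, ?_⟩
      · rcases List.mem_append.1 hJ with h | h
        · exact h₁.2.1 J h
        · exact h₂.2.1 J (by rw [hq]; exact List.mem_cons_of_mem _ h)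
      · show List.IsChain _ _; rw [List.isChain_append]
        refine ⟨h₁.2.2, ?_, ?_⟩
        · have := h₂.2.2; rw [hq] at this; exact this.tail
        · intro p hp q' hq'
          simp at hq'
          rw [j₁.2] at hp; simp at hp
          subst hp; subst hq'
          have := h₂.2.2; rw [hq] at this
          exact (List.isChain_cons_cons.1 this).1
    · constructor
      · rw [List.head?_append, j₁.1]; rfl
      · rw [List.getLast?_append]
        have : (b :: t).getLast? = some z := by
          have := j₂.2; rw [hq] at this; rw [← this]; simp
        rw [this]; rfl
    · rw [hd, List.append_assoc]
      have : ([y] : List (Finset I)) ++ b :: t = y :: b :: t := rfl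
      rw [this, kappa_append_cons (B := B) d (b :: t) y, ← hd, ← hq]
    · rcases List.mem_append.1 hJ with h | h
      · exact Or.inl h
      · exact Or.inr (by rw [hq]; exact List.mem_cons_of_mem _ h)

end Paths
section Nodal
variable {I : Type*} [DecidableEq I] {H B : Set (Finset I)} {D : NodalDatum H}

/-- Reachability by a 1-path avoiding `B`. -/
def Reach0 (H B : Set (Finset I)) (u v : Finset I) : Prop :=
  ∃ γ, IsKPath H 1 γ ∧ Joins γ u v ∧ kappa B γ = 0

lemma Reach0.refl {u : Finset I} (h : u ∈ level H 1) : Reach0 H B u u :=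
  ⟨[u], ⟨by simp, by simpa using h, List.isChain_singleton _⟩, ⟨rfl, rfl⟩, kappa_single u⟩

lemma Reach0.symm {u v : Finset I} (h : Reach0 H B u v) : Reach0 H B v u := by
  obtain ⟨γ, h1, h2, h3⟩ := h
  exact ⟨γ.reverse, h1.rev, h2.rev, by rwa [kappa_reverse]⟩

lemma Reach0.trans {u v w : Finset I} (h : Reach0 H B u v) (h' : Reach0 H B v w) :
    Reach0 H B u w := by
  obtain ⟨γ, h1, h2, h3⟩ := h
  obtain ⟨γ', h1', h2', h3'⟩ := h'
  obtain ⟨γ'', p1, p2, p3, _⟩ := glue (B := B) h1 h1' h2 h2'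
  exact ⟨γ'', p1, p2, by omega⟩

lemma singleton_level (hH : IsCSS H) (x : I) : ({x} : Finset I) ∈ level H 1 :=
  ⟨hH.2 x, Finset.card_singleton x⟩

lemma hB_sub (hB : IsSepBlock D B) : B ⊆ D.N ∩ level H 2 := hB.1.2.1

lemma hB_conn (hB : IsSepBlock D B) : KConnectedIn H 2 B := hB.1.2.2.1

/-- In a nodal stratum of cardinality 3, one side is a singleton `{s}`, and the
2-element subsets belonging to `N` are exactly those containing `s`. -/
lemma triple_struct (hT : T ∈ D.N) (hc : T.card = 3) :
    ∃ s ∈ T, ∀ J' ⊆ T, J'.card = 2 → (J' ∈ D.N ↔ s ∈ J') := by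
  have hu := D.union_eq T hT
  have hd := D.disj T hT
  have hcard : (D.plus T).card + (D.minus T).card = 3 := by
    rw [← Finset.card_union_of_disjoint hd, hu, hc]
  have hp := D.plus_nonempty T hT
  have hm := D.minus_nonempty T hT
  have key : ∀ P M : Finset I, P ∪ M = T → P.card = 1 →
      (∀ J' ⊆ T, (J' ∈ D.N ↔ (J' ∩ P).Nonempty ∧ (J' ∩ M).Nonempty)) →
      ∃ s ∈ T, ∀ J' ⊆ T, J'.card = 2 → (J' ∈ D.N ↔ s ∈ J') := by
    intro P M hPM hP1 hmem
    obtain ⟨s, hs⟩ := Finset.card_eq_one.1 hP1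
    refine ⟨s, by rw [← hPM, hs]; simp, fun J' hJ' hJc => ?_⟩
    rw [hmem J' hJ']
    constructor
    · rintro ⟨⟨a, ha⟩, -⟩
      rw [hs] at ha
      simp at ha
      rw [← ha.2]; exact ha.1
    · intro hsJ
      obtain ⟨t, ht, hts⟩ : ∃ t ∈ J', t ≠ s := by
        by_contra hcon
        push_neg at hcon
        have : J' ⊆ {s} := fun a ha => by simp [hcon a ha]
        have := Finset.card_le_card this
        simp [hJc] at this
      refine ⟨⟨s, by rw [hs]; simp [hsJ]⟩, ⟨t, ?_⟩⟩
      have htT : t ∈ T := hJ' ht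
      rw [← hPM] at htT
      rcases Finset.mem_union.1 htT with h | h
      · rw [hs] at h; simp at h; exact absurd h hts
      · exact Finset.mem_inter.2 ⟨ht, h⟩
  have hmemN := D.mem_iff T hT
  have hp1 : 1 ≤ (D.plus T).card := Finset.card_pos.2 hp
  have hm1 : 1 ≤ (D.minus T).card := Finset.card_pos.2 hm
  rcases (by omega : (D.plus T).card = 1 ∨ (D.minus T).card = 1) with h1 | h1
  · exact key _ _ hu h1 hmemN
  · refine key (D.minus T) (D.plus T) (by rw [Finset.union_comm]; exact hu) h1 ?_
    intro J' hJ'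
    rw [hmemN J' hJ']
    exact and_comm

/-- A nodal 2-stratum adjacent to the block `B` lies in `B`. -/
lemma absorb (hB : IsSepBlock D B) {E F : Finset I}
    (hF : F ∈ D.N) (hFl : F ∈ level H 2) (hE : E ∈ B) (hEF : E ∪ F ∈ level H 3) :
    F ∈ B := by
  have conn := hB_conn hB
  have hsubB := hB_sub hB
  have hconn' : KConnectedIn H 2 (insert F B) := by
    have prepath : ∀ J' ∈ B, ∃ γ : List (Finset I), IsKPath H 2 γ ∧ Joins γ F J' ∧
        ∀ K ∈ γ, K ∈ insert F B := by
      intro J' hJ'B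
      obtain ⟨π, p1, p2, p3⟩ := conn E hE J' hJ'B
      refine ⟨F :: π, ⟨by simp, ?_, ?_⟩, p2.cons' p1.1, ?_⟩
      · rintro K hK
        rcases List.mem_cons.1 hK with rfl | hK
        · exact hFl
        · exact p1.2.1 K hK
      · show List.IsChain _ _; rw [List.isChain_cons]
        refine ⟨?_, p1.2.2⟩
        intro y hy
        obtain ⟨t, rfl⟩ := joins_head_eq p2 p1.1
        simp at hy
        subst hy
        rwa [Finset.union_comm]
      · intro K hK
        rcases List.mem_cons.1 hK with rfl | hK
        · exact Set.mem_insert _ _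
        · exact Set.mem_insert_of_mem _ (p3 K hK)
    intro J hJ J' hJ'
    rcases Set.mem_insert_iff.1 hJ with hJF | hJB
    · rcases Set.mem_insert_iff.1 hJ' with hJ'F | hJ'B
      · refine ⟨[F], ⟨by simp, by simpa using hFl, List.isChain_singleton _⟩, ?_, by
          intro K hK; simp at hK; subst hK; exact Set.mem_insert _ _⟩
        rw [hJF, hJ'F]; exact ⟨rfl, rfl⟩
      · obtain ⟨γ, p1, p2, p3⟩ := prepath J' hJ'B
        exact ⟨γ, p1, by rw [hJF]; exact p2, p3⟩
    · rcases Set.mem_insert_iff.1 hJ' with hJ'F | hJ'B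
      · obtain ⟨γ, p1, p2, p3⟩ := prepath J hJB
        refine ⟨γ.reverse, p1.rev, by rw [hJ'F]; exact p2.rev,
          fun K hK => p3 K (by simpa using hK)⟩
      · obtain ⟨π, p1, p2, p3⟩ := conn J hJB J' hJ'B
        exact ⟨π, p1, p2, fun K hK => Set.mem_insert_of_mem _ (p3 K hK)⟩
  have := hB.1.2.2.2 (insert F B) (Set.subset_insert _ _)
    (Set.insert_subset ⟨hF, hFl⟩ hsubB) hconn'
  rw [← this]
  exact Set.mem_insert _ _

end Nodal
section Transport
variable {I : Type*} [DecidableEq I] {H B : Set (Finset I)} {D : NodalDatum H}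

lemma pair_card {a b : I} (h : a ≠ b) : ({a, b} : Finset I).card = 2 :=
  Finset.card_pair h

lemma adj_block (hH : IsCSS H) (hB : IsSepBlock D B) {J₀ J₁ : Finset I}
    (h₀ : J₀ ∈ B) (h₁ : J₁ ∈ B) (hU : J₀ ∪ J₁ ∈ level H 3) :
    ∃ s u w : I, J₀ = {s, u} ∧ J₁ = {s, w} ∧ u ≠ w ∧ s ≠ u ∧ s ≠ w ∧
      ({u, w} : Finset I) ∈ level H 2 ∧ ({u, w} : Finset I) ∉ B := by
  have hsub := hB_sub hB
  have hN₀ := (hsub h₀).1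
  have hN₁ := (hsub h₁).1
  have hc₀ := (hsub h₀).2.2
  have hc₁ := (hsub h₁).2.2
  have hTN : J₀ ∪ J₁ ∈ D.N := (hB.2 h₀).2 _ hU.1 Finset.subset_union_left
  obtain ⟨s, hsT, char⟩ := triple_struct hTN hU.2
  have hs₀ : s ∈ J₀ := (char J₀ Finset.subset_union_left hc₀).1 hN₀
  have hs₁ : s ∈ J₁ := (char J₁ Finset.subset_union_right hc₁).1 hN₁
  obtain ⟨a, b, hab, hJ₀⟩ := Finset.card_eq_two.1 hc₀
  obtain ⟨c, d, hcd, hJ₁⟩ := Finset.card_eq_two.1 hc₁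
  obtain ⟨u, hu, hJ₀'⟩ : ∃ u, s ≠ u ∧ J₀ = {s, u} := by
    rw [hJ₀] at hs₀; simp at hs₀
    rcases hs₀ with rfl | rfl
    · exact ⟨b, hab, hJ₀⟩
    · exact ⟨a, fun h => hab h.symm, by rw [hJ₀, Finset.pair_comm]⟩
  obtain ⟨w, hw, hJ₁'⟩ : ∃ w, s ≠ w ∧ J₁ = {s, w} := by
    rw [hJ₁] at hs₁; simp at hs₁
    rcases hs₁ with rfl | rfl
    · exact ⟨d, hcd, hJ₁⟩
    · exact ⟨c, fun h => hcd h.symm, by rw [hJ₁, Finset.pair_comm]⟩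
  have huw : u ≠ w := by
    rintro rfl
    rw [hJ₀', hJ₁', Finset.union_self] at hU
    have := hU.2
    rw [pair_card hu] at this
    omega
  have hsubT : ({u, w} : Finset I) ⊆ J₀ ∪ J₁ := by
    intro t ht
    simp at ht
    rcases ht with rfl | rfl
    · exact Finset.mem_union_left _ (by rw [hJ₀']; simp)
    · exact Finset.mem_union_right _ (by rw [hJ₁']; simp)
  have hlev : ({u, w} : Finset I) ∈ level H 2 :=
    ⟨hH.1 _ hU.1 _ hsubT, pair_card huw⟩
  have hnotN : ({u, w} : Finset I) ∉ D.N := by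
    intro hmem
    have := (char _ hsubT (pair_card huw)).1 hmem
    simp at this
    rcases this with rfl | rfl
    · exact hu rfl
    · exact hw rfl
  exact ⟨s, u, w, hJ₀', hJ₁', huw, hu, hw, hlev, fun hmem => hnotN (hsub hmem).1⟩

lemma trans_side (hH : IsCSS H) (hB : IsSepBlock D B) :
    ∀ (π : List (Finset I)) (J₀ : Finset I), IsKPath H 2 (J₀ :: π) →
    (∀ K ∈ J₀ :: π, K ∈ B) → ∀ x ∈ J₀,
    ∃ Jl, (J₀ :: π).getLast? = some Jl ∧ ∃ y ∈ Jl, Reach0 H B {x} {y} := by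
  intro π
  induction π with
  | nil =>
    intro J₀ _ hsup x hx
    exact ⟨J₀, rfl, x, hx, Reach0.refl (singleton_level hH x)⟩
  | cons J₁ π' ih =>
    intro J₀ hpath hsup x hx
    have hU : J₀ ∪ J₁ ∈ level H 3 := (List.isChain_cons_cons.1 hpath.2.2).1
    obtain ⟨s, u, w, hJ₀, hJ₁, huw, hsu, hsw, hlev, hnotB⟩ :=
      adj_block hH hB (hsup J₀ (by simp)) (hsup J₁ (by simp)) hU
    have hpath' : IsKPath H 2 (J₁ :: π') :=
      hpath.infix' (List.suffix_cons J₀ _).isInfix (by simp)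
    have hsup' : ∀ K ∈ J₁ :: π', K ∈ B := fun K hK => hsup K (List.mem_cons_of_mem _ hK)
    rw [hJ₀] at hx
    simp at hx
    rcases hx with rfl | rfl
    · obtain ⟨Jl, hJl, y, hy, hr⟩ := ih J₁ hpath' hsup' x (by rw [hJ₁]; simp)
      exact ⟨Jl, by rw [List.getLast?_cons_cons]; exact hJl, y, hy, hr⟩
    · obtain ⟨Jl, hJl, y, hy, hr⟩ := ih J₁ hpath' hsup' w (by rw [hJ₁]; simp)
      refine ⟨Jl, by rw [List.getLast?_cons_cons]; exact hJl, y, hy, ?_⟩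
      refine Reach0.trans ?_ hr
      refine ⟨[{x}, {w}], ⟨by simp, ?_, ?_⟩, ⟨rfl, rfl⟩, ?_⟩
      · intro K hK
        rcases List.mem_cons.1 hK with rfl | hK
        · exact singleton_level hH x
        · simp at hK; subst hK; exact singleton_level hH w
      · show List.IsChain _ _; rw [List.isChain_cons_cons]
        exact ⟨hlev, by simp⟩
      · have hn : ({x} : Finset I) ∪ {w} ∉ B := by simpa using hnotB
        rw [kappa_cons_cons, kappa_single, if_neg hn]

lemma cross (hH : IsCSS H) (hB : IsSepBlock D B) {a b c d : I}
    (hab : ({a, b} : Finset I) ∈ B) (hcd : ({c, d} : Finset I) ∈ B)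
    (hbc : Reach0 H B {b} {c}) : Reach0 H B {a} {d} := by
  obtain ⟨π, p1, p2, p3⟩ := hB_conn hB _ hab _ hcd
  obtain ⟨rest, rfl⟩ := joins_head_eq p2 p1.1
  -- forward transport of a
  obtain ⟨Jl, hJl, y, hy, hr⟩ := trans_side hH hB rest _ p1 p3 a (by simp)
  have hJlcd : Jl = ({c, d} : Finset I) := by
    have := p2.2
    rw [hJl] at this
    exact (Option.some.inj this)
  rw [hJlcd] at hy
  simp at hy
  rcases hy with rfl | rfl
  · -- y = c : also transport d backwards
    obtain ⟨rest', hrev⟩ := joins_head_eq p2.rev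
      (by simp [List.reverse_eq_nil_iff])
    have prev : IsKPath H 2 ({y, d} :: rest') := by rw [← hrev]; exact p1.rev
    have psup : ∀ K ∈ ({y, d} : Finset I) :: rest', K ∈ B := by
      intro K hK
      rw [← hrev] at hK
      exact p3 K (List.mem_reverse.1 hK)
    obtain ⟨Jl', hJl', z, hz, hr'⟩ := trans_side hH hB rest' _ prev psup d (by simp)
    have hJlab : Jl' = ({a, b} : Finset I) := by
      have := p2.rev.2
      rw [hrev, hJl'] at this
      exact (Option.some.inj this)
    rw [hJlab] at hz
    simp at hz
    rcases hz with rfl | rfl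
    · exact hr'.symm
    · exact (hr.trans hbc.symm).trans hr'.symm
  · exact hr

end Transport
section Parity
variable {I : Type*} [DecidableEq I] {H B : Set (Finset I)} {D : NodalDatum H}

lemma triple_parity (hH : IsCSS H) (hB : IsSepBlock D B) {i₁ i₂ i₃ : I}
    (h12 : i₁ ≠ i₂) (h13 : i₁ ≠ i₃) (h23 : i₂ ≠ i₃)
    (hT : ({i₁, i₂, i₃} : Finset I) ∈ H) :
    ((if ({i₁, i₂} : Finset I) ∈ B then 1 else 0) +
     (if ({i₁, i₃} : Finset I) ∈ B then 1 else 0) +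
     (if ({i₃, i₂} : Finset I) ∈ B then 1 else 0)) % 2 = 0 := by
  have hTc : ({i₁, i₂, i₃} : Finset I).card = 3 := by
    rw [Finset.card_insert_of_notMem (by simp [h12, h13]), pair_card h23]
  have sub12 : ({i₁, i₂} : Finset I) ⊆ {i₁, i₂, i₃} := by
    intro t ht; simp at ht ⊢; tauto
  have sub13 : ({i₁, i₃} : Finset I) ⊆ {i₁, i₂, i₃} := by
    intro t ht; simp at ht ⊢; tauto
  have sub32 : ({i₃, i₂} : Finset I) ⊆ {i₁, i₂, i₃} := by
    intro t ht; simp at ht ⊢; tauto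
  have c12 := pair_card h12
  have c13 := pair_card h13
  have c32 := pair_card (fun h : i₃ = i₂ => h23 h.symm)
  have lev12 : ({i₁, i₂} : Finset I) ∈ level H 2 := ⟨hH.1 _ hT _ sub12, c12⟩
  have lev13 : ({i₁, i₃} : Finset I) ∈ level H 2 := ⟨hH.1 _ hT _ sub13, c13⟩
  have lev32 : ({i₃, i₂} : Finset I) ∈ level H 2 := ⟨hH.1 _ hT _ sub32, c32⟩
  have u1213 : ({i₁, i₂} : Finset I) ∪ {i₁, i₃} = {i₁, i₂, i₃} := by
    ext t; simp; try tauto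
  have u1232 : ({i₁, i₂} : Finset I) ∪ {i₃, i₂} = {i₁, i₂, i₃} := by
    ext t; simp; try tauto
  have u1332 : ({i₁, i₃} : Finset I) ∪ {i₃, i₂} = {i₁, i₂, i₃} := by
    ext t; simp; try tauto
  have levT : ({i₁, i₂, i₃} : Finset I) ∈ level H 3 := ⟨hT, hTc⟩
  by_cases hsome : ({i₁, i₂} : Finset I) ∈ B ∨ ({i₁, i₃} : Finset I) ∈ B ∨
      ({i₃, i₂} : Finset I) ∈ B
  · have hTN : ({i₁, i₂, i₃} : Finset I) ∈ D.N := by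
      rcases hsome with h | h | h
      · exact (hB.2 h).2 _ hT sub12
      · exact (hB.2 h).2 _ hT sub13
      · exact (hB.2 h).2 _ hT sub32
    obtain ⟨s, hsT, char⟩ := triple_struct hTN hTc
    have m12 := char _ sub12 c12
    have m13 := char _ sub13 c13
    have m32 := char _ sub32 c32
    simp at hsT
    rcases hsT with h | h | h
    · rw [h] at m12 m13 m32
      have n12 : ({i₁, i₂} : Finset I) ∈ D.N := m12.2 (by simp)
      have n13 : ({i₁, i₃} : Finset I) ∈ D.N := m13.2 (by simp)
      have b32 : ({i₃, i₂} : Finset I) ∉ B := by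
        intro hb
        have := m32.1 (hB_sub hB hb).1
        simp at this
        tauto
      have hboth : ({i₁, i₂} : Finset I) ∈ B ∧ ({i₁, i₃} : Finset I) ∈ B := by
        rcases hsome with hb | hb | hb
        · exact ⟨hb, absorb hB n13 lev13 hb (u1213 ▸ levT)⟩
        · refine ⟨absorb hB n12 lev12 hb ?_, hb⟩
          rw [Finset.union_comm, u1213]; exact levT
        · exact absurd hb b32
      rw [if_pos hboth.1, if_pos hboth.2, if_neg b32]
    · rw [h] at m12 m13 m32
      have n12 : ({i₁, i₂} : Finset I) ∈ D.N := m12.2 (by simp)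
      have n32 : ({i₃, i₂} : Finset I) ∈ D.N := m32.2 (by simp)
      have b13 : ({i₁, i₃} : Finset I) ∉ B := by
        intro hb
        have := m13.1 (hB_sub hB hb).1
        simp at this
        rcases this with h' | h'
        · exact h12 h'.symm
        · exact h23 h'
      have hboth : ({i₁, i₂} : Finset I) ∈ B ∧ ({i₃, i₂} : Finset I) ∈ B := by
        rcases hsome with hb | hb | hb
        · exact ⟨hb, absorb hB n32 lev32 hb (u1232 ▸ levT)⟩
        · exact absurd hb b13
        · refine ⟨absorb hB n12 lev12 hb ?_, hb⟩
          rw [Finset.union_comm, u1232]; exact levT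
      rw [if_pos hboth.1, if_pos hboth.2, if_neg b13]
    · rw [h] at m12 m13 m32
      have n13 : ({i₁, i₃} : Finset I) ∈ D.N := m13.2 (by simp)
      have n32 : ({i₃, i₂} : Finset I) ∈ D.N := m32.2 (by simp)
      have b12 : ({i₁, i₂} : Finset I) ∉ B := by
        intro hb
        have := m12.1 (hB_sub hB hb).1
        simp at this
        rcases this with h' | h'
        · exact h13 h'.symm
        · exact h23 h'.symm
      have hboth : ({i₁, i₃} : Finset I) ∈ B ∧ ({i₃, i₂} : Finset I) ∈ B := by
        rcases hsome with hb | hb | hb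
        · exact absurd hb b12
        · exact ⟨hb, absorb hB n32 lev32 hb (u1332 ▸ levT)⟩
        · refine ⟨absorb hB n13 lev13 hb ?_, hb⟩
          rw [Finset.union_comm, u1332]; exact levT
      rw [if_neg b12, if_pos hboth.1, if_pos hboth.2]
  · push_neg at hsome
    rw [if_neg hsome.1, if_neg hsome.2.1, if_neg hsome.2.2]

lemma elem_parity (hH : IsCSS H) (hB : IsSepBlock D B) {γ₁ γ₂ : List (Finset I)}
    (h : ElemHomotopy H γ₁ γ₂) : kappa B γ₁ % 2 = kappa B γ₂ % 2 := by
  obtain ⟨δ, ε₁, ε₂, ρ, hpair, h1, h2⟩ := h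
  subst h1; subst h2
  suffices core : ∀ ε ε' : List (Finset I), ElemPairCore H ε ε' →
      kappa B (δ ++ ε ++ ρ) % 2 = kappa B (δ ++ ε' ++ ρ) % 2 by
    rcases hpair with hp | hp
    · exact core _ _ hp
    · exact (core _ _ hp).symm
  intro ε ε' hp
  rcases hp with rfl | ⟨i₁, i₂, rfl, rfl⟩ | ⟨i₁, i₂, i₃, rfl, rfl, hp2⟩
  · rfl
  · have e1 : δ ++ [{i₁}, {i₂}, {i₁}] ++ ρ = δ ++ ({i₁} : Finset I) ::
        (({i₂} : Finset I) :: ({i₁} : Finset I) :: ρ) := by simp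
    have e2 : δ ++ [{i₁}] ++ ρ = δ ++ ({i₁} : Finset I) :: ρ := by simp
    have k1 := kappa_append_cons (B := B) δ (({i₂} : Finset I) :: ({i₁} : Finset I) :: ρ)
      ({i₁} : Finset I)
    have k2a := kappa_cons_cons (B := B) ({i₁} : Finset I) ({i₂} : Finset I)
      (({i₁} : Finset I) :: ρ)
    have k2b := kappa_cons_cons (B := B) ({i₂} : Finset I) ({i₁} : Finset I) ρ
    have k3 := kappa_append_cons (B := B) δ ρ ({i₁} : Finset I)
    have ecomm : ({i₂} : Finset I) ∪ {i₁} = ({i₁} : Finset I) ∪ {i₂} :=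
      Finset.union_comm _ _
    rw [ecomm] at k2b
    rw [e1, e2]
    omega
  · have hc1 : ({i₁, i₃} : Finset I).card = 2 := (hp2.2.1 _ (by simp)).2
    have hc2 : ({i₃, i₂} : Finset I).card = 2 := (hp2.2.1 _ (by simp)).2
    have h13 : i₁ ≠ i₃ := by intro h'; subst h'; simp at hc1
    have h32 : i₃ ≠ i₂ := by intro h'; subst h'; simp at hc2
    have hU : ({i₁, i₃} : Finset I) ∪ {i₃, i₂} ∈ level H 3 :=
      (List.isChain_cons_cons.1 hp2.2.2).1
    have hUT : ({i₁, i₃} : Finset I) ∪ {i₃, i₂} = {i₁, i₂, i₃} := by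
      ext t; simp; try tauto
    rw [hUT] at hU
    have h12 : i₁ ≠ i₂ := by
      intro h'
      subst h'
      have := hU.2
      rw [Finset.insert_idem, pair_card h13] at this
      omega
    have tp := triple_parity hH hB h12 h13 (fun h' => h32 h'.symm) hU.1
    have e1 : δ ++ [{i₁}, {i₂}] ++ ρ = δ ++ ({i₁} : Finset I) ::
        (({i₂} : Finset I) :: ρ) := by simp
    have e2 : δ ++ [{i₁}, {i₃}, {i₂}] ++ ρ = δ ++ ({i₁} : Finset I) ::
        (({i₃} : Finset I) :: ({i₂} : Finset I) :: ρ) := by simp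
    have k1 := kappa_append_cons (B := B) δ (({i₂} : Finset I) :: ρ) ({i₁} : Finset I)
    have k2 := kappa_cons_cons (B := B) ({i₁} : Finset I) ({i₂} : Finset I) ρ
    have k3 := kappa_append_cons (B := B) δ
      (({i₃} : Finset I) :: ({i₂} : Finset I) :: ρ) ({i₁} : Finset I)
    have k4 := kappa_cons_cons (B := B) ({i₁} : Finset I) ({i₃} : Finset I)
      (({i₂} : Finset I) :: ρ)
    have k5 := kappa_cons_cons (B := B) ({i₃} : Finset I) ({i₂} : Finset I) ρ
    have u12 : ({i₁} : Finset I) ∪ {i₂} = {i₁, i₂} := rfl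
    have u13 : ({i₁} : Finset I) ∪ {i₃} = {i₁, i₃} := rfl
    have u32 : ({i₃} : Finset I) ∪ {i₂} = {i₃, i₂} := rfl
    rw [u12] at k2
    rw [u13] at k4
    rw [u32] at k5
    rw [e1, e2]
    omega

lemma hom_parity (hH : IsCSS H) (hB : IsSepBlock D B) {A : Set (Finset I)}
    {γ γ' : List (Finset I)} (h : HomotopicIn H A γ γ') :
    kappa B γ % 2 = kappa B γ' % 2 := by
  obtain ⟨-, hrel⟩ := h
  induction hrel with
  | refl => rfl
  | tail _ h2 ih => exact ih.trans (elem_parity hH hB h2.1)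

lemma par_eq (hH : IsCSS H) (hsc : SimplyConnected H) (hB : IsSepBlock D B)
    {γ γ' : List (Finset I)} {x y : Finset I}
    (p : IsKPath H 1 γ) (p' : IsKPath H 1 γ')
    (j : Joins γ x y) (j' : Joins γ' x y) :
    kappa B γ % 2 = kappa B γ' % 2 :=
  hom_parity hH hB (hsc.2 γ γ' p p' p.2.1 p'.2.1
    (j.1.trans j'.1.symm) (j.2.trans j'.2.symm))

end Parity
section KeyLemma
variable {I : Type*} [DecidableEq I] {H B : Set (Finset I)} {D : NodalDatum H}

lemma head?_append_left {α : Type*} {l r : List α} {x : α}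
    (h : (l ++ r).head? = some x) (hne : l ≠ []) : l.head? = some x := by
  rw [List.head?_append] at h
  cases hl : l.head? with
  | none => exact absurd (List.head?_eq_none_iff.1 hl) hne
  | some z => rw [hl] at h; simpa using h
lemma getLast?_append_right {α : Type*} {l r : List α} {x : α}
    (h : (l ++ r).getLast? = some x) (hne : r ≠ []) : r.getLast? = some x := by
  rw [List.getLast?_append] at h
  cases hl : r.getLast? with
  | none => exact absurd (List.getLast?_eq_none_iff.1 hl) hne
  | some z => rw [hl] at h; simpa using h

/-- Decomposition of a path at its first `B`-crossing. -/
lemma first_cross : ∀ γ : List (Finset I), kappa B γ ≠ 0 →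
    ∃ δ a b ρ, γ = δ ++ a :: b :: ρ ∧ a ∪ b ∈ B ∧ kappa B (δ ++ [a]) = 0 := by
  intro γ
  induction γ with
  | nil => intro h; exact absurd rfl h
  | cons a l ih =>
    intro h
    cases l with
    | nil => exact absurd (kappa_single a) h
    | cons b r =>
      by_cases hab : a ∪ b ∈ B
      · exact ⟨[], a, b, r, rfl, hab, kappa_single a⟩
      · have h' : kappa B (b :: r) ≠ 0 := by
          rw [kappa_cons_cons, if_neg hab] at h
          simpa using h
        obtain ⟨δ', a', b', ρ', heq, hB', hk⟩ := ih h'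
        refine ⟨a :: δ', a', b', ρ', by rw [List.cons_append, heq], hB', ?_⟩
        obtain ⟨t, ht⟩ : ∃ t, δ' ++ [a'] = b :: t := by
          have h2 : (δ' ++ [a']) ++ b' :: ρ' = b :: r := by
            rw [List.append_assoc]
            exact heq.symm
          cases hh : δ' ++ [a'] with
          | nil => simp at hh
          | cons z t =>
            rw [hh] at h2
            simp only [List.cons_append] at h2
            exact ⟨t, by rw [(List.cons_eq_cons.1 h2).1]⟩
        show kappa B ((a :: δ') ++ [a']) = 0
        rw [List.cons_append, ht, kappa_cons_cons, if_neg hab, ← ht, hk]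

/-- The key lemma: an even path can be replaced by a `B`-avoiding path. -/
lemma even_to_zero (hH : IsCSS H) (hB : IsSepBlock D B) :
    ∀ n (γ : List (Finset I)) (x y : Finset I), γ.length ≤ n → IsKPath H 1 γ →
    Joins γ x y → kappa B γ % 2 = 0 → Reach0 H B x y := by
  intro n
  induction n with
  | zero =>
    intro γ x y hlen hp _ _
    rw [Nat.le_zero, List.length_eq_zero_iff] at hlen
    exact absurd hlen hp.1
  | succ n ih =>
    intro γ x y hlen hp hj hk
    by_cases h0 : kappa B γ = 0
    · exact ⟨γ, hp, hj, h0⟩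
    obtain ⟨δ, a, b, ρ, hγ, hab, kδ⟩ := first_cross γ h0
    have kγ : kappa B γ = kappa B (δ ++ [a]) + kappa B (a :: b :: ρ) := by
      rw [hγ, kappa_append_cons]
    have kab : kappa B (a :: b :: ρ) = 1 + kappa B (b :: ρ) := by
      rw [kappa_cons_cons, if_pos hab]
    have hbρ : kappa B (b :: ρ) ≠ 0 := by omega
    obtain ⟨σ, c, d, τ, hbρeq, hcd, kσ⟩ := first_cross _ hbρ
    have kcd : kappa B (c :: d :: τ) = 1 + kappa B (d :: τ) := by
      rw [kappa_cons_cons, if_pos hcd]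
    have kbρ : kappa B (b :: ρ) = kappa B (σ ++ [c]) + kappa B (c :: d :: τ) := by
      rw [hbρeq, kappa_append_cons]
    -- re-assemble γ
    have hγ2 : γ = (δ ++ [a]) ++ (σ ++ [c]) ++ (d :: τ) := by
      rw [hγ, hbρeq]; simp
    -- sub-paths
    have p1 : IsKPath H 1 (δ ++ [a]) :=
      hp.infix' ⟨[], (σ ++ [c]) ++ (d :: τ), by rw [hγ2]; simp⟩ (by simp)
    have p2 : IsKPath H 1 (σ ++ [c]) :=
      hp.infix' ⟨δ ++ [a], d :: τ, by rw [hγ2]⟩ (by simp)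
    have p3 : IsKPath H 1 (d :: τ) :=
      hp.infix' ⟨(δ ++ [a]) ++ (σ ++ [c]), [], by rw [hγ2]; simp⟩ (by simp)
    -- joins
    have j1 : Joins (δ ++ [a]) x a := by
      refine ⟨?_, by rw [List.getLast?_append]; rfl⟩
      have := hj.1
      rw [hγ2, List.append_assoc] at this
      exact head?_append_left this (by simp)
    have jbρ : (b :: ρ).head? = some b := rfl
    have j2 : Joins (σ ++ [c]) b c := by
      refine ⟨?_, by rw [List.getLast?_append]; rfl⟩
      have hsplit : (σ ++ [c]) ++ (d :: τ) = σ ++ c :: d :: τ := by simp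
      have hh : ((σ ++ [c]) ++ (d :: τ)).head? = some b := by
        rw [hsplit, ← hbρeq]
        simp
      exact head?_append_left hh (by simp)
    have j3 : Joins (d :: τ) d y := by
      refine ⟨rfl, ?_⟩
      have := hj.2
      rw [hγ2] at this
      exact getLast?_append_right this (by simp)
    -- a b c d are singletons
    obtain ⟨a', rfl⟩ := Finset.card_eq_one.1 (hp.2.1 a (by rw [hγ]; simp)).2
    obtain ⟨b', rfl⟩ := Finset.card_eq_one.1 (hp.2.1 b (by rw [hγ]; simp)).2
    obtain ⟨c', rfl⟩ := Finset.card_eq_one.1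
      (hp.2.1 c (by rw [hγ, hbρeq]; simp)).2
    obtain ⟨d', rfl⟩ := Finset.card_eq_one.1
      (hp.2.1 d (by rw [hγ, hbρeq]; simp)).2
    have hab' : ({a', b'} : Finset I) ∈ B := hab
    have hcd' : ({c', d'} : Finset I) ∈ B := hcd
    have r1 : Reach0 H B x {a'} := ⟨δ ++ [{a'}], p1, j1, kδ⟩
    have r2 : Reach0 H B {b'} {c'} := ⟨σ ++ [{c'}], p2, j2, kσ⟩
    have rad : Reach0 H B {a'} {d'} := cross hH hB hab' hcd' r2
    -- induction on the tail
    have klen : (({d'} : Finset I) :: τ).length ≤ n := by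
      have e1 : γ.length = δ.length + 2 + ρ.length := by rw [hγ]; simp; omega
      have e2 : 1 + ρ.length = σ.length + 2 + τ.length := by
        have := congrArg List.length hbρeq
        simp at this
        omega
      simp
      omega
    have r3 : Reach0 H B {d'} y := ih _ _ _ klen p3 j3 (by omega)
    exact (r1.trans rad).trans r3

/-- A `B`-avoiding 1-path in `H` is a 1-path in `H \ Cl H B`. -/
lemma zero_path_HB (hH : IsCSS H) (hB : IsSepBlock D B) :
    ∀ γ : List (Finset I), IsKPath H 1 γ → kappa B γ = 0 →
    IsKPath (H \ Cl H B) 1 γ := by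
  have hlev1 : ∀ K : Finset I, K ∈ level H 1 → K ∈ level (H \ Cl H B) 1 := by
    intro K hK
    refine ⟨⟨hK.1, ?_⟩, hK.2⟩
    rintro ⟨-, J, hJ, hJK⟩
    have := Finset.card_le_card hJK
    rw [hK.2, (hB_sub hB hJ).2.2] at this
    omega
  intro γ
  induction γ with
  | nil => intro hp _; exact absurd rfl hp.1
  | cons a l ih =>
    intro hp hk
    cases l with
    | nil =>
      exact ⟨by simp, fun J hJ => by
        simp at hJ; subst hJ; exact hlev1 _ (hp.2.1 _ (by simp)), List.isChain_singleton _⟩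
    | cons b r =>
      have hab : a ∪ b ∉ B := by
        rw [kappa_cons_cons] at hk
        by_contra hmem
        rw [if_pos hmem] at hk
        omega
      have hk' : kappa B (b :: r) = 0 := by
        rw [kappa_cons_cons] at hk; omega
      have hp' : IsKPath H 1 (b :: r) :=
        hp.infix' (List.suffix_cons a _).isInfix (by simp)
      have ihr := ih hp' hk'
      refine ⟨by simp, ?_, ?_⟩
      · intro J hJ
        rcases List.mem_cons.1 hJ with rfl | hJ
        · exact hlev1 _ (hp.2.1 _ (by simp))
        · exact ihr.2.1 J hJ
      · show List.IsChain _ _; rw [List.isChain_cons_cons]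
        refine ⟨?_, ihr.2.2⟩
        have hU : a ∪ b ∈ level H 2 := (List.isChain_cons_cons.1 hp.2.2).1
        refine ⟨⟨hU.1, ?_⟩, hU.2⟩
        rintro ⟨-, J, hJ, hJU⟩
        have : J = a ∪ b :=
          Finset.eq_of_subset_of_card_le hJU (by rw [hU.2, (hB_sub hB hJ).2.2])
        exact hab (this ▸ hJ)

/-- Conversely, a 1-path in `H \ Cl H B` is a `B`-avoiding 1-path in `H`. -/
lemma HB_path_H (hH : IsCSS H) (hB : IsSepBlock D B) :
    ∀ γ : List (Finset I), IsKPath (H \ Cl H B) 1 γ →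
    IsKPath H 1 γ ∧ kappa B γ = 0 := by
  intro γ
  induction γ with
  | nil => intro hp; exact absurd rfl hp.1
  | cons a l ih =>
    intro hp
    cases l with
    | nil =>
      refine ⟨⟨by simp, fun J hJ => ?_, List.isChain_singleton _⟩, kappa_single a⟩
      have hJa : J = a := by simpa using hJ
      have h2 := hp.2.1 a (by simp)
      rw [hJa]
      exact ⟨h2.1.1, h2.2⟩
    | cons b r =>
      have hp' : IsKPath (H \ Cl H B) 1 (b :: r) :=
        hp.infix' (List.suffix_cons a _).isInfix (by simp)
      obtain ⟨hpH, hk⟩ := ih hp'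
      have hU : a ∪ b ∈ level (H \ Cl H B) 2 := (List.isChain_cons_cons.1 hp.2.2).1
      have hUB : a ∪ b ∉ B := by
        intro hmem
        exact hU.1.2 ⟨hU.1.1, a ∪ b, hmem, Finset.Subset.refl _⟩
      refine ⟨⟨by simp, ?_, ?_⟩, ?_⟩
      · intro J hJ
        rcases List.mem_cons.1 hJ with rfl | hJ
        · have := hp.2.1 J (by simp)
          exact ⟨this.1.1, this.2⟩
        · exact hpH.2.1 J hJ
      · show List.IsChain _ _; rw [List.isChain_cons_cons]
        exact ⟨⟨hU.1.1, hU.2⟩, hpH.2.2⟩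
      · rw [kappa_cons_cons, if_neg hUB, hk]

end KeyLemma
section Assembly
variable {I : Type*} [DecidableEq I] {H B : Set (Finset I)} {D : NodalDatum H}

lemma mem_AB_i (hH : IsCSS H) (i : I) : ({i} : Finset I) ∈ ABset H B i :=
  ⟨singleton_level hH i,
    [{i}], ⟨by simp, by simpa using singleton_level hH i, List.isChain_singleton _⟩, ⟨rfl, rfl⟩,
    by rw [kappa_single]; exact Even.zero⟩

lemma last_mem_level {γ : List (Finset I)} {x y : Finset I} {k : ℕ}
    (p : IsKPath H k γ) (j : Joins γ x y) : y ∈ level H k := by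
  obtain ⟨t, rfl⟩ := joins_last_eq j p.1
  exact p.2.1 y (by simp)

lemma A_class {i : I} {j j' : Finset I} (hj : j ∈ ABset H B i)
    (hr : Reach0 H B j j') : j' ∈ ABset H B i := by
  obtain ⟨hjlev, γ, pγ, jγ, hev⟩ := hj
  obtain ⟨σ, pσ, jσ, hk0⟩ := hr
  obtain ⟨γ'', p, jn, keq, -⟩ := glue (B := B) pγ pσ jγ jσ
  exact ⟨last_mem_level pσ jσ, γ'', p, jn, by rw [keq, hk0]; simpa using hev⟩

lemma B_class {i : I} {j j' : Finset I} (hj : j ∈ BBset H B i)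
    (hr : Reach0 H B j j') : j' ∈ BBset H B i := by
  obtain ⟨hjlev, γ, pγ, jγ, hev⟩ := hj
  obtain ⟨σ, pσ, jσ, hk0⟩ := hr
  obtain ⟨γ'', p, jn, keq, -⟩ := glue (B := B) pγ pσ jγ jσ
  exact ⟨last_mem_level pσ jσ, γ'', p, jn, by rw [keq, hk0]; simpa using hev⟩

lemma A_reach (hH : IsCSS H) (hB : IsSepBlock D B) {i : I} {j j' : Finset I}
    (hj : j ∈ ABset H B i) (hj' : j' ∈ ABset H B i) : Reach0 H B j j' := by
  obtain ⟨-, γ, pγ, jγ, hev⟩ := hj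
  obtain ⟨-, γ', pγ', jγ', hev'⟩ := hj'
  obtain ⟨γ'', p, jn, keq, -⟩ := glue (B := B) pγ.rev pγ' jγ.rev jγ'
  refine even_to_zero hH hB γ''.length γ'' j j' le_rfl p jn ?_
  rw [keq, kappa_reverse]
  rw [Nat.even_iff] at hev hev'
  omega

lemma B_reach (hH : IsCSS H) (hB : IsSepBlock D B) {i : I} {j j' : Finset I}
    (hj : j ∈ BBset H B i) (hj' : j' ∈ BBset H B i) : Reach0 H B j j' := by
  obtain ⟨-, γ, pγ, jγ, hev⟩ := hj
  obtain ⟨-, γ', pγ', jγ', hev'⟩ := hj'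
  obtain ⟨γ'', p, jn, keq, -⟩ := glue (B := B) pγ.rev pγ' jγ.rev jγ'
  refine even_to_zero hH hB γ''.length γ'' j j' le_rfl p jn ?_
  rw [keq, kappa_reverse]
  rw [Nat.odd_iff] at hev hev'
  omega

/-- A vertex on a `B`-avoiding path starting in a parity class stays in the class. -/
lemma reach_support {j : Finset I} {γ : List (Finset I)}
    (pγ : IsKPath H 1 γ) (jh : γ.head? = some j) (hk0 : kappa B γ = 0) :
    ∀ K ∈ γ, Reach0 H B j K := by
  intro K hK
  obtain ⟨s, t, rfl⟩ := List.mem_iff_append.1 hK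
  have hpre : (s ++ [K]) ++ t = s ++ K :: t := by simp
  refine ⟨s ++ [K], pγ.infix' ⟨[], t, by simpa using hpre⟩ (by simp), ⟨?_, ?_⟩, ?_⟩
  · exact head?_append_left (by rw [hpre]; exact jh) (by simp)
  · rw [List.getLast?_append]; rfl
  · exact (kappa_split_zero hk0).1

lemma AB_not_both (hH : IsCSS H) (hsc : SimplyConnected H) (hB : IsSepBlock D B)
    {i : I} {j : Finset I} (hj : j ∈ ABset H B i) (hj' : j ∈ BBset H B i) : False := by
  obtain ⟨-, γ, pγ, jγ, hev⟩ := hj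
  obtain ⟨-, γ', pγ', jγ', hodd⟩ := hj'
  have := par_eq hH hsc hB pγ pγ' jγ jγ'
  rw [Nat.even_iff] at hev
  rw [Nat.odd_iff] at hodd
  omega

lemma BB_nonempty (hH : IsCSS H) (hsc : SimplyConnected H) (hB : IsSepBlock D B)
    (i : I) : ∃ j, j ∈ BBset H B i := by
  obtain ⟨E, hE⟩ := hB.1.1
  obtain ⟨u, v, huv, hEuv⟩ := Finset.card_eq_two.1 (hB_sub hB hE).2.2
  obtain ⟨γ, pγ, jγ, -⟩ := hsc.1 {i} (singleton_level hH i) {u} (singleton_level hH u)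
  by_cases hpar : Odd (kappa B γ)
  · exact ⟨{u}, singleton_level hH u, γ, pγ, jγ, hpar⟩
  · rw [Nat.not_odd_iff_even] at hpar
    have hlevE : E ∈ level H 2 := ⟨(hB_sub hB hE).2.1, (hB_sub hB hE).2.2⟩
    have huvlev : ({u} : Finset I) ∪ {v} ∈ level H 2 := by
      rw [show ({u} : Finset I) ∪ {v} = {u, v} from rfl, ← hEuv]; exact hlevE
    have p' : IsKPath H 1 (γ ++ [{v}]) := by
      refine ⟨by simp [pγ.1], ?_, ?_⟩
      · intro J hJ
        rcases List.mem_append.1 hJ with hJ | hJ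
        · exact pγ.2.1 J hJ
        · simp at hJ; subst hJ; exact singleton_level hH v
      · show List.IsChain _ _; rw [List.isChain_append]
        refine ⟨pγ.2.2, by simp, ?_⟩
        intro x hx y hy
        rw [jγ.2] at hx
        simp at hx hy
        subst hx; subst hy
        exact huvlev
    obtain ⟨dd, hdd⟩ := joins_last_eq jγ pγ.1
    have kγ' : kappa B (γ ++ [{v}]) = kappa B γ + 1 := by
      rw [hdd, List.append_assoc]
      rw [show ([{u}] : List (Finset I)) ++ [{v}] = {u} :: [{v}] from rfl]
      rw [kappa_append_cons, ← hdd]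
      have : kappa B [({u} : Finset I), {v}] = 1 := by
        rw [kappa_cons_cons, kappa_single,
          if_pos (by rw [show ({u} : Finset I) ∪ {v} = {u, v} from rfl, ← hEuv]; exact hE)]
      rw [this]
    refine ⟨{v}, singleton_level hH v, γ ++ [{v}], p', jγ.append_single, ?_⟩
    rw [kγ', Nat.odd_iff, Nat.add_mod]
    rw [Nat.even_iff] at hpar
    omega

end Assembly


/-- For a nodal separating block `B` of a simply connected combinatorial
strata structure and `H_B = H \ Cl_H(B)`: for every `i ∈ I`, the sets `A_B(i)` and
`B_B(i)` are exactly the two 1-connected components of `H(1)` in `H_B`. -/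
theorem ABset_BBset_are_the_components
    {I : Type*} [Fintype I] [DecidableEq I] (H : Set (Finset I))
    (hH : IsCSS H) (hsc : SimplyConnected H)
    (D : NodalDatum H) (B : Set (Finset I)) (hB : IsSepBlock D B) :
    ∀ i : I,
      IsKComponent (H \ Cl H B) 1 (level H 1) (ABset H B i) ∧
      IsKComponent (H \ Cl H B) 1 (level H 1) (BBset H B i) ∧
      ABset H B i ≠ BBset H B i ∧
      ∀ C : Set (Finset I), IsKComponent (H \ Cl H B) 1 (level H 1) C →
        C = ABset H B i ∨ C = BBset H B i := by
  intro i
  -- connectivity of the two classes inside `H \ Cl H B`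
  have connA : KConnectedIn (H \ Cl H B) 1 (ABset H B i) := by
    intro j hj j' hj'
    obtain ⟨γ, pγ, jγ, k0⟩ := A_reach hH hB hj hj'
    exact ⟨γ, zero_path_HB hH hB γ pγ k0, jγ,
      fun K hK => A_class hj (reach_support pγ jγ.1 k0 K hK)⟩
  have connB : KConnectedIn (H \ Cl H B) 1 (BBset H B i) := by
    intro j hj j' hj'
    obtain ⟨γ, pγ, jγ, k0⟩ := B_reach hH hB hj hj'
    exact ⟨γ, zero_path_HB hH hB γ pγ k0, jγ,
      fun K hK => B_class hj (reach_support pγ jγ.1 k0 K hK)⟩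
  -- any element `B`-avoiding-reachable set containing a class point is in the class
  have subA : ∀ C' : Set (Finset I), C' ⊆ level H 1 →
      KConnectedIn (H \ Cl H B) 1 C' → ({i} : Finset I) ∈ C' → C' ⊆ ABset H B i := by
    intro C' hC'lev hconn hiC' c hc
    obtain ⟨π, pπ, jπ, -⟩ := hconn {i} hiC' c hc
    obtain ⟨pπH, k0⟩ := HB_path_H hH hB π pπ
    exact ⟨hC'lev hc, π, pπH, jπ, by rw [k0]; exact Even.zero⟩
  -- cover : every vertex is in one of the two classes
  have cover : ∀ j ∈ level H 1, j ∈ ABset H B i ∨ j ∈ BBset H B i := by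
    intro j hj
    obtain ⟨γ, pγ, jγ, -⟩ := hsc.1 {i} (singleton_level hH i) j hj
    rcases Nat.even_or_odd (kappa B γ) with h | h
    · exact Or.inl ⟨hj, γ, pγ, jγ, h⟩
    · exact Or.inr ⟨hj, γ, pγ, jγ, h⟩
  obtain ⟨b₀, hb₀⟩ := BB_nonempty hH hsc hB i
  have subB : ∀ C' : Set (Finset I), C' ⊆ level H 1 →
      KConnectedIn (H \ Cl H B) 1 C' → b₀ ∈ C' → C' ⊆ BBset H B i := by
    intro C' hC'lev hconn hbC' c hc
    obtain ⟨π, pπ, jπ, -⟩ := hconn b₀ hbC' c hc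
    obtain ⟨pπH, k0⟩ := HB_path_H hH hB π pπ
    exact B_class hb₀ ⟨π, pπH, jπ, k0⟩
  have hAlev : ABset H B i ⊆ level H 1 := fun J hJ => hJ.1
  have hBlev : BBset H B i ⊆ level H 1 := fun J hJ => hJ.1
  have compA : IsKComponent (H \ Cl H B) 1 (level H 1) (ABset H B i) := by
    refine ⟨⟨{i}, mem_AB_i hH i⟩, hAlev, connA, ?_⟩
    intro C' hsub hC'lev hconn
    exact Set.Subset.antisymm (subA C' hC'lev hconn (hsub (mem_AB_i hH i))) hsub
  have compB : IsKComponent (H \ Cl H B) 1 (level H 1) (BBset H B i) := by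
    refine ⟨⟨b₀, hb₀⟩, hBlev, connB, ?_⟩
    intro C' hsub hC'lev hconn
    exact Set.Subset.antisymm (subB C' hC'lev hconn (hsub hb₀)) hsub
  refine ⟨compA, compB, ?_, ?_⟩
  · intro h
    exact AB_not_both hH hsc hB (mem_AB_i hH i) (h ▸ mem_AB_i hH i)
  · intro C hC
    obtain ⟨c, hc⟩ := hC.1
    rcases cover c (hC.2.1 hc) with hcA | hcB
    · left
      have hCsub : C ⊆ ABset H B i := by
        intro c' hc'
        obtain ⟨π, pπ, jπ, -⟩ := hC.2.2.1 c hc c' hc'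
        obtain ⟨pπH, k0⟩ := HB_path_H hH hB π pπ
        exact A_class hcA ⟨π, pπH, jπ, k0⟩
      exact (hC.2.2.2 (ABset H B i) hCsub hAlev connA).symm ▸ rfl
    · right
      have hCsub : C ⊆ BBset H B i := by
        intro c' hc'
        obtain ⟨π, pπ, jπ, -⟩ := hC.2.2.1 c hc c' hc'
        obtain ⟨pπH, k0⟩ := HB_path_H hH hB π pπ
        exact B_class hcB ⟨π, pπH, jπ, k0⟩
      exact (hC.2.2.2 (BBset H B i) hCsub hBlev connB).symm ▸ rfl
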